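/- Let K be a simplicial complex, let u ≠ v be two vertices of K, and let d = dim(K). Then no missing face of K of dimension ≤ d contains both u and v if and only if skel_{d−2}(lk(u,K) ∩ lk(v,K)) = lk({u,v},K). -/
import Mathlib


open Finset

variable {V : Type*} [DecidableEq V]

/-- A (finite) simplicial complex, given by its finite family of faces:
closed under subsets and containing the empty set.  The vertices of `K` are
exactly the elements `v` with `{v} ∈ K`. -/
def IsComplex (K : Finset (Finset V)) : Prop :=
  ∅ ∈ K ∧ ∀ S ∈ K, ∀ T ⊆ S, T ∈ K

/-- The dimension of `K` : the maximum of `|F| - 1` over the faces `F` of `K`. -/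
def dimC (K : Finset (Finset V)) : ℤ :=
  ((K.sup Finset.card : ℕ) : ℤ) - 1

/-- `T` is a missing face of `K` : a set of vertices of `K` which is not a face of `K`
while all its proper subsets are faces of `K`. -/
def IsMissingFace (K : Finset (Finset V)) (T : Finset V) : Prop :=
  (∀ x ∈ T, ({x} : Finset V) ∈ K) ∧ T ∉ K ∧ ∀ S ⊂ T, S ∈ K

/-- The contraction of `u` onto `v` is admissible if no missing face of `K` of
dimension `≤ dim K` contains both `u` and `v`. -/
def Admissible (K : Finset (Finset V)) (u v : V) : Prop :=
  ∀ T : Finset V, IsMissingFace K T → (T.card : ℤ) - 1 ≤ dimC K → ¬(u ∈ T ∧ v ∈ T)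

/-- The contraction of `u` onto `v`:
`K' = {T ∈ K : u ∉ T} ∪ {(T \ {u}) ∪ {v} : u ∈ T ∈ K}`. -/
def contractC (K : Finset (Finset V)) (u v : V) : Finset (Finset V) :=
  K.filter (fun T => u ∉ T) ∪ (K.filter (fun T => u ∈ T)).image (fun T => insert v (T.erase u))

/-- The link of a face: `lk(S,K) = {T ∈ K : T ∩ S = ∅ ∧ T ∪ S ∈ K}`. -/
def linkC (K : Finset (Finset V)) (S : Finset V) : Finset (Finset V) :=
  K.filter (fun T => T ∩ S = ∅ ∧ T ∪ S ∈ K)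

/-- The `m`-skeleton: all faces of dimension at most `m`. -/
def skelC (K : Finset (Finset V)) (m : ℤ) : Finset (Finset V) :=
  K.filter (fun F => (F.card : ℤ) - 1 ≤ m)

lemma exists_missing_face_subset (K : Finset (Finset V))
    (A : Finset V) (hA : A ∉ K) (hsing : ∀ x ∈ A, ({x} : Finset V) ∈ K) :
    ∃ S ⊆ A, IsMissingFace K S := by
  classical
  obtain ⟨S, hS, hmin⟩ := (A.powerset.filter (· ∉ K)).exists_min_image Finset.card
    ⟨A, by simp [hA]⟩
  simp only [Finset.mem_filter, Finset.mem_powerset] at hS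
  refine ⟨S, hS.1, fun x hx => hsing x (hS.1 hx), hS.2, fun S' hS' => ?_⟩
  by_contra h
  have := hmin S' (by
    simp only [Finset.mem_filter, Finset.mem_powerset]
    exact ⟨hS'.subset.trans hS.1, h⟩)
  exact absurd (Finset.card_lt_card hS') (not_lt.2 this)

lemma mem_linkC_singleton {K : Finset (Finset V)} {T : Finset V} {u : V} :
    T ∈ linkC K {u} ↔ T ∈ K ∧ u ∉ T ∧ T ∪ {u} ∈ K := by
  simp only [linkC, Finset.mem_filter]
  constructor
  · rintro ⟨h1, h2, h3⟩
    refine ⟨h1, fun hu => ?_, h3⟩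
    have : u ∈ T ∩ {u} := Finset.mem_inter.2 ⟨hu, Finset.mem_singleton_self u⟩
    simp [h2] at this
  · rintro ⟨h1, h2, h3⟩
    refine ⟨h1, ?_, h3⟩
    rw [Finset.eq_empty_iff_forall_notMem]
    intro x hx
    rw [Finset.mem_inter, Finset.mem_singleton] at hx
    exact h2 (hx.2 ▸ hx.1)

/-- For distinct vertices `u ≠ v` of a simplicial complex `K` with
`d = dim K`, no missing face of `K` of dimension `≤ d` contains both `u` and `v`
iff `skel_{d-2}(lk(u,K) ∩ lk(v,K)) = lk({u,v},K)`. -/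

theorem admissibility_iff_skeleton_link_condition
    (K : Finset (Finset V)) (hK : IsComplex K) (u v : V)
    (hu : ({u} : Finset V) ∈ K) (hv : ({v} : Finset V) ∈ K) (huv : u ≠ v) :
    (∀ T : Finset V, IsMissingFace K T → (T.card : ℤ) - 1 ≤ dimC K → ¬(u ∈ T ∧ v ∈ T)) ↔
      skelC (linkC K {u} ∩ linkC K {v}) (dimC K - 2) = linkC K {u, v} := by
  classical
  have hpair : ({u, v} : Finset V).card = 2 := by
    rw [Finset.card_insert_of_notMem (by simp [huv]), Finset.card_singleton]
  constructor
  · intro hadm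
    apply Finset.Subset.antisymm
    · intro T hT
      simp only [skelC, Finset.mem_filter, Finset.mem_inter, mem_linkC_singleton] at hT
      obtain ⟨⟨⟨hTK, huT, hTuK⟩, _, hvT, hTvK⟩, hcard⟩ := hT
      simp only [linkC, Finset.mem_filter]
      have hdis : Disjoint T ({u, v} : Finset V) := by
        rw [Finset.disjoint_right]
        intro x hx
        rw [Finset.mem_insert, Finset.mem_singleton] at hx
        rcases hx with rfl | rfl
        · exact huT
        · exact hvT
      refine ⟨hTK, Finset.disjoint_iff_inter_eq_empty.1 hdis, ?_⟩
      by_contra hA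
      have hsingA : ∀ x ∈ T ∪ ({u, v} : Finset V), ({x} : Finset V) ∈ K := by
        intro x hx
        rw [Finset.mem_union, Finset.mem_insert, Finset.mem_singleton] at hx
        rcases hx with hx | rfl | rfl
        · exact hK.2 T hTK {x} (Finset.singleton_subset_iff.2 hx)
        · exact hu
        · exact hv
      obtain ⟨S, hSA, hSmf⟩ := exists_missing_face_subset K _ hA hsingA
      have huS : u ∈ S := by
        by_contra h
        refine hSmf.2.1 (hK.2 _ hTvK S ?_)
        intro x hx
        have hx' := hSA hx
        rw [Finset.mem_union, Finset.mem_insert, Finset.mem_singleton] at hx'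
        rw [Finset.mem_union, Finset.mem_singleton]
        rcases hx' with h1 | rfl | rfl
        · exact Or.inl h1
        · exact absurd hx h
        · exact Or.inr rfl
      have hvS : v ∈ S := by
        by_contra h
        refine hSmf.2.1 (hK.2 _ hTuK S ?_)
        intro x hx
        have hx' := hSA hx
        rw [Finset.mem_union, Finset.mem_insert, Finset.mem_singleton] at hx'
        rw [Finset.mem_union, Finset.mem_singleton]
        rcases hx' with h1 | rfl | rfl
        · exact Or.inl h1
        · exact Or.inr rfl
        · exact absurd hx h
      refine hadm S hSmf ?_ ⟨huS, hvS⟩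
      have h1 : S.card ≤ (T ∪ {u, v}).card := Finset.card_le_card hSA
      have h2 : (T ∪ {u, v}).card ≤ T.card + 2 := by
        calc (T ∪ {u, v}).card ≤ T.card + ({u, v} : Finset V).card :=
              Finset.card_union_le _ _
          _ = T.card + 2 := by rw [hpair]
      unfold dimC at hcard ⊢
      push_cast at hcard ⊢
      omega
    · intro T hT
      simp only [linkC, Finset.mem_filter] at hT
      obtain ⟨hTK, hTint, hTun⟩ := hT
      have huT : u ∉ T := by
        intro h
        have : u ∈ T ∩ ({u, v} : Finset V) := Finset.mem_inter.2 ⟨h, by simp⟩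
        simp [hTint] at this
      have hvT : v ∉ T := by
        intro h
        have : v ∈ T ∩ ({u, v} : Finset V) := Finset.mem_inter.2 ⟨h, by simp⟩
        simp [hTint] at this
      simp only [skelC, Finset.mem_filter, Finset.mem_inter, mem_linkC_singleton]
      have hTuK : T ∪ {u} ∈ K :=
        hK.2 _ hTun _ (Finset.union_subset_union_right (by simp))
      have hTvK : T ∪ {v} ∈ K :=
        hK.2 _ hTun _ (Finset.union_subset_union_right (by simp))
      refine ⟨⟨⟨hTK, huT, hTuK⟩, hTK, hvT, hTvK⟩, ?_⟩
      have hdis : Disjoint T ({u, v} : Finset V) := by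
        rw [Finset.disjoint_right]
        intro x hx
        rw [Finset.mem_insert, Finset.mem_singleton] at hx
        rcases hx with rfl | rfl
        · exact huT
        · exact hvT
      have hcd : (T ∪ {u, v}).card = T.card + 2 := by
        rw [Finset.card_union_of_disjoint hdis, hpair]
      have hle : (T ∪ {u, v}).card ≤ K.sup Finset.card := Finset.le_sup hTun
      unfold dimC
      push_cast
      omega
  · rintro heq T hmf hcard ⟨huT, hvT⟩
    have hsubset : ({u, v} : Finset V) ⊆ T := by
      intro x hx
      rw [Finset.mem_insert, Finset.mem_singleton] at hx
      rcases hx with rfl | rfl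
      · exact huT
      · exact hvT
    set S := T \ ({u, v} : Finset V) with hSdef
    have hSuv : S ∪ ({u, v} : Finset V) = T := Finset.sdiff_union_of_subset hsubset
    have huS : u ∉ S := by simp [hSdef]
    have hvS : v ∉ S := by simp [hSdef]
    have hST : S ⊆ T := Finset.sdiff_subset
    have hSssub : S ⊂ T := ⟨hST, fun h => huS (h huT)⟩
    have hSK : S ∈ K := hmf.2.2 S hSssub
    have hSuK : S ∪ {u} ∈ K := by
      refine hmf.2.2 _ ⟨?_, fun h => ?_⟩
      · intro x hx
        rw [Finset.mem_union, Finset.mem_singleton] at hx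
        rcases hx with hx | rfl
        · exact hST hx
        · exact huT
      · have hv' := h hvT
        rw [Finset.mem_union, Finset.mem_singleton] at hv'
        rcases hv' with h1 | h1
        · exact hvS h1
        · exact huv h1.symm
    have hSvK : S ∪ {v} ∈ K := by
      refine hmf.2.2 _ ⟨?_, fun h => ?_⟩
      · intro x hx
        rw [Finset.mem_union, Finset.mem_singleton] at hx
        rcases hx with hx | rfl
        · exact hST hx
        · exact hvT
      · have hu' := h huT
        rw [Finset.mem_union, Finset.mem_singleton] at hu'
        rcases hu' with h1 | h1
        · exact huS h1
        · exact huv h1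
    have h2T : 2 ≤ T.card := hpair ▸ Finset.card_le_card hsubset
    have hScard : S.card + 2 = T.card := by
      rw [hSdef, Finset.card_sdiff_of_subset hsubset, hpair]
      omega
    have hSmem : S ∈ skelC (linkC K {u} ∩ linkC K {v}) (dimC K - 2) := by
      simp only [skelC, Finset.mem_filter, Finset.mem_inter, mem_linkC_singleton]
      refine ⟨⟨⟨hSK, huS, hSuK⟩, hSK, hvS, hSvK⟩, ?_⟩
      unfold dimC at hcard ⊢
      push_cast at hcard ⊢
      omega
    rw [heq] at hSmem
    simp only [linkC, Finset.mem_filter] at hSmem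
    exact hmf.2.1 (hSuv ▸ hSmem.2.2)
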